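/- Let F : RingCatᵒᵖ ⥤ Type be a functor, and suppose there is a natural isomorphism between the composite of the opposite of the inclusion functor CommRingCat ⥤ RingCat with F and the prime spectrum functor CommRingCatᵒᵖ ⥤ Type (sending a commutative ring A to PrimeSpectrum A and a ring homomorphism f to PrimeSpectrum.comap f). Then for every ring R and every natural number n ≥ 3, the set F.obj (op (RingCat.of (Matrix (Fin n) (Fin n) R))) is empty. -/

import Mathlib

open CategoryTheory Opposite

universe u

/-- The prime spectrum functor `CommRingCatᵒᵖ ⥤ Type`, sending a commutative ring `A` to
its set of prime ideals and a ring homomorphism to the preimage map on prime ideals. -/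
def primeSpectrumFunctor : CommRingCat.{u}ᵒᵖ ⥤ Type u where
  obj A := PrimeSpectrum A.unop
  map f := TypeCat.ofHom (PrimeSpectrum.comap f.unop.hom)
  map_id := by
    intro A
    refine ConcreteCategory.hom_ext _ _ fun x => ?_
    show PrimeSpectrum.comap (RingHom.id _) x = x
    simp
  map_comp := by
    intro A B C f g
    ext x
    rfl

section Aux
open Matrix

def EO (a b c : Prop) : Prop := (a ∨ b ∨ c) ∧ ¬(a ∧ b) ∧ ¬(a ∧ c) ∧ ¬(b ∧ c)

theorem coreUnsat {X3 : Prop} {X13 : Prop} {X29 : Prop} {X31 : Prop} {X32 : Prop} {X34 : Prop} {X35 : Prop} {X38 : Prop} {X39 : Prop} {X40 : Prop} {X41 : Prop} {X43 : Prop} {X44 : Prop} {X46 : Prop} {X47 : Prop} {X51 : Prop} {X52 : Prop} {X54 : Prop} {X55 : Prop} {X57 : Prop} {X63 : Prop} {X64 : Prop} {X65 : Prop} {X69 : Prop} {X72 : Prop} {X73 : Prop} {X75 : Prop} {X77 : Prop} {X79 : Prop} {X80 : Prop} {X82 : Prop} {X84 : Prop} {X85 : Prop} {X87 : Prop} {X90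 : Prop} {X96 : Prop} {X97 : Prop} {X101 : Prop} {X105 : Prop} {X107 : Prop} {X113 : Prop} {X115 : Prop} {X118 : Prop} {X135 : Prop}
    (h0 : EO X3 X90 X101)
    (h1 : EO X13 X75 X97)
    (h2 : EO X29 X35 X135)
    (h3 : EO X29 X79 X84)
    (h4 : EO X31 X32 X135)
    (h5 : EO X31 X52 X118)
    (h6 : EO X31 X64 X101)
    (h7 : EO X32 X79 X82)
    (h8 : EO X34 X57 X107)
    (h9 : EO X34 X75 X90)
    (h10 : EO X35 X46 X118)
    (h11 : EO X35 X73 X90)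
    (h12 : EO X38 X47 X115)
    (h13 : EO X38 X57 X105)
    (h14 : EO X38 X73 X87)
    (h15 : EO X39 X46 X115)
    (h16 : EO X39 X55 X107)
    (h17 : EO X39 X72 X87)
    (h18 : EO X40 X73 X85)
    (h19 : EO X41 X47 X113)
    (h20 : EO X41 X72 X85)
    (h21 : EO X43 X44 X115)
    (h22 : EO X43 X54 X105)
    (h23 : EO X44 X65 X97)
    (h24 : EO X46 X77 X82)
    (h25 : EO X47 X64 X97)
    (h26 : EO X51 X52 X107)
    (h27 : EO X51 X63 X97)
    (h28 : EO X52 X77 X80)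
    (h29 : EO X54 X64 X96)
    (h30 : EO X57 X63 X96)
    (h31 : EO X64 X73 X82)
    (h32 : EO X65 X69 X87) : False := by
  rcases Classical.em (X3) with p3 | n3
  · -- X3 true
    have n90 : ¬ X90 := fun t => h0.2.1 ⟨p3, t⟩
    have n101 : ¬ X101 := fun t => h0.2.2.1 ⟨p3, t⟩
    rcases Classical.em (X13) with p13 | n13
    · -- X13 true
      have n75 : ¬ X75 := fun t => h1.2.1 ⟨p13, t⟩
      have n97 : ¬ X97 := fun t => h1.2.2.1 ⟨p13, t⟩
      have p34 : X34 := h9.1.resolve_right (fun o => o.elim n75 n90)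
      have n57 : ¬ X57 := fun t => h8.2.1 ⟨p34, t⟩
      have n107 : ¬ X107 := fun t => h8.2.2.1 ⟨p34, t⟩
      rcases Classical.em (X29) with p29 | n29
      · -- X29 true
        have n35 : ¬ X35 := fun t => h2.2.1 ⟨p29, t⟩
        have n135 : ¬ X135 := fun t => h2.2.2.1 ⟨p29, t⟩
        have n79 : ¬ X79 := fun t => h3.2.1 ⟨p29, t⟩
        have n84 : ¬ X84 := fun t => h3.2.2.1 ⟨p29, t⟩
        have p73 : X73 := (h11.1.resolve_left n35).resolve_right n90
        have n38 : ¬ X38 := fun t => h14.2.1 ⟨t, p73⟩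
        have n87 : ¬ X87 := fun t => h14.2.2.2 ⟨p73, t⟩
        have n40 : ¬ X40 := fun t => h18.2.1 ⟨t, p73⟩
        have n85 : ¬ X85 := fun t => h18.2.2.2 ⟨p73, t⟩
        have n64 : ¬ X64 := fun t => h31.2.1 ⟨t, p73⟩
        have n82 : ¬ X82 := fun t => h31.2.2.2 ⟨p73, t⟩
        have p31 : X31 := h6.1.resolve_right (fun o => o.elim n64 n101)
        have p32 : X32 := h7.1.resolve_right (fun o => o.elim n79 n82)
        have p105 : X105 := (h13.1.resolve_left n38).resolve_left n57
        have n43 : ¬ X43 := fun t => h22.2.2.1 ⟨t, p105⟩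
        have n54 : ¬ X54 := fun t => h22.2.2.2 ⟨t, p105⟩
        have p47 : X47 := h25.1.resolve_right (fun o => o.elim n64 n97)
        have p96 : X96 := (h29.1.resolve_left n54).resolve_left n64
        have n63 : ¬ X63 := fun t => h30.2.2.2 ⟨t, p96⟩
        exact h4.2.1 ⟨p31, p32⟩
      · -- X29 false
        rcases Classical.em (X35) with p35 | n35
        · -- X35 true
          have n135 : ¬ X135 := fun t => h2.2.2.2 ⟨p35, t⟩
          have n46 : ¬ X46 := fun t => h10.2.1 ⟨p35, t⟩
          have n118 : ¬ X118 := fun t => h10.2.2.1 ⟨p35, t⟩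
          have n73 : ¬ X73 := fun t => h11.2.1 ⟨p35, t⟩
          rcases Classical.em (X79) with p79 | n79
          · -- X79 true
            have n84 : ¬ X84 := fun t => h3.2.2.2 ⟨p79, t⟩
            have n32 : ¬ X32 := fun t => h7.2.1 ⟨t, p79⟩
            have n82 : ¬ X82 := fun t => h7.2.2.2 ⟨p79, t⟩
            have p77 : X77 := (h24.1.resolve_left n46).resolve_right n82
            have n52 : ¬ X52 := fun t => h28.2.1 ⟨t, p77⟩
            have n80 : ¬ X80 := fun t => h28.2.2.2 ⟨p77, t⟩
            have p64 : X64 := h31.1.resolve_right (fun o => o.elim n73 n82)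
            have p31 : X31 := h4.1.resolve_right (fun o => o.elim n32 n135)
            exact h6.2.1 ⟨p31, p64⟩
          · -- X79 false
            have p84 : X84 := (h3.1.resolve_left n29).resolve_left n79
            rcases Classical.em (X31) with p31 | n31
            · -- X31 true
              have n32 : ¬ X32 := fun t => h4.2.1 ⟨p31, t⟩
              have n52 : ¬ X52 := fun t => h5.2.1 ⟨p31, t⟩
              have n64 : ¬ X64 := fun t => h6.2.1 ⟨p31, t⟩
              have p82 : X82 := (h7.1.resolve_left n32).resolve_left n79
              have n77 : ¬ X77 := fun t => h24.2.2.2 ⟨t, p82⟩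
              have p47 : X47 := h25.1.resolve_right (fun o => o.elim n64 n97)
              have p51 : X51 := h26.1.resolve_right (fun o => o.elim n52 n107)
              have n63 : ¬ X63 := fun t => h27.2.1 ⟨p51, t⟩
              have p80 : X80 := (h28.1.resolve_left n52).resolve_left n77
              have p96 : X96 := (h30.1.resolve_left n57).resolve_left n63
              have n38 : ¬ X38 := fun t => h12.2.1 ⟨t, p47⟩
              have n115 : ¬ X115 := fun t => h12.2.2.2 ⟨p47, t⟩
              have p105 : X105 := (h13.1.resolve_left n38).resolve_left n57
              have p87 : X87 := (h14.1.resolve_left n38).resolve_left n73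
              have p39 : X39 := h15.1.resolve_right (fun o => o.elim n46 n115)
              have n55 : ¬ X55 := fun t => h16.2.1 ⟨p39, t⟩
              exact h17.2.2.1 ⟨p39, p87⟩
            · -- X31 false
              have p32 : X32 := (h4.1.resolve_left n31).resolve_right n135
              have p52 : X52 := (h5.1.resolve_left n31).resolve_right n118
              have p64 : X64 := (h6.1.resolve_left n31).resolve_right n101
              have n82 : ¬ X82 := fun t => h7.2.2.1 ⟨p32, t⟩
              have p77 : X77 := (h24.1.resolve_left n46).resolve_right n82
              have n47 : ¬ X47 := fun t => h25.2.1 ⟨t, p64⟩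
              have n51 : ¬ X51 := fun t => h26.2.1 ⟨t, p52⟩
              have p63 : X63 := (h27.1.resolve_left n51).resolve_right n97
              exact h28.2.1 ⟨p52, p77⟩
        · -- X35 false
          have p135 : X135 := (h2.1.resolve_left n29).resolve_left n35
          have n31 : ¬ X31 := fun t => h4.2.2.1 ⟨t, p135⟩
          have n32 : ¬ X32 := fun t => h4.2.2.2 ⟨t, p135⟩
          have p64 : X64 := (h6.1.resolve_left n31).resolve_right n101
          have p73 : X73 := (h11.1.resolve_left n35).resolve_right n90
          have n38 : ¬ X38 := fun t => h14.2.1 ⟨t, p73⟩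
          have n87 : ¬ X87 := fun t => h14.2.2.2 ⟨p73, t⟩
          have n40 : ¬ X40 := fun t => h18.2.1 ⟨t, p73⟩
          have n85 : ¬ X85 := fun t => h18.2.2.2 ⟨p73, t⟩
          have n47 : ¬ X47 := fun t => h25.2.1 ⟨t, p64⟩
          have n54 : ¬ X54 := fun t => h29.2.1 ⟨t, p64⟩
          have n96 : ¬ X96 := fun t => h29.2.2.2 ⟨p64, t⟩
          have p63 : X63 := (h30.1.resolve_left n57).resolve_right n96
          exact h31.2.1 ⟨p64, p73⟩
    · -- X13 false
      rcases Classical.em (X75) with p75 | n75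
      · -- X75 true
        have n97 : ¬ X97 := fun t => h1.2.2.2 ⟨p75, t⟩
        have n34 : ¬ X34 := fun t => h9.2.1 ⟨t, p75⟩
        rcases Classical.em (X29) with p29 | n29
        · -- X29 true
          have n35 : ¬ X35 := fun t => h2.2.1 ⟨p29, t⟩
          have n135 : ¬ X135 := fun t => h2.2.2.1 ⟨p29, t⟩
          have n79 : ¬ X79 := fun t => h3.2.1 ⟨p29, t⟩
          have n84 : ¬ X84 := fun t => h3.2.2.1 ⟨p29, t⟩
          have p73 : X73 := (h11.1.resolve_left n35).resolve_right n90
          have n38 : ¬ X38 := fun t => h14.2.1 ⟨t, p73⟩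
          have n87 : ¬ X87 := fun t => h14.2.2.2 ⟨p73, t⟩
          have n40 : ¬ X40 := fun t => h18.2.1 ⟨t, p73⟩
          have n85 : ¬ X85 := fun t => h18.2.2.2 ⟨p73, t⟩
          have n64 : ¬ X64 := fun t => h31.2.1 ⟨t, p73⟩
          have n82 : ¬ X82 := fun t => h31.2.2.2 ⟨p73, t⟩
          have p31 : X31 := h6.1.resolve_right (fun o => o.elim n64 n101)
          have p32 : X32 := h7.1.resolve_right (fun o => o.elim n79 n82)
          have p47 : X47 := h25.1.resolve_right (fun o => o.elim n64 n97)
          exact h4.2.1 ⟨p31, p32⟩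
        · -- X29 false
          rcases Classical.em (X35) with p35 | n35
          · -- X35 true
            have n135 : ¬ X135 := fun t => h2.2.2.2 ⟨p35, t⟩
            have n46 : ¬ X46 := fun t => h10.2.1 ⟨p35, t⟩
            have n118 : ¬ X118 := fun t => h10.2.2.1 ⟨p35, t⟩
            have n73 : ¬ X73 := fun t => h11.2.1 ⟨p35, t⟩
            rcases Classical.em (X79) with p79 | n79
            · -- X79 true
              have n84 : ¬ X84 := fun t => h3.2.2.2 ⟨p79, t⟩
              have n32 : ¬ X32 := fun t => h7.2.1 ⟨t, p79⟩
              have n82 : ¬ X82 := fun t => h7.2.2.2 ⟨p79, t⟩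
              have p77 : X77 := (h24.1.resolve_left n46).resolve_right n82
              have n52 : ¬ X52 := fun t => h28.2.1 ⟨t, p77⟩
              have n80 : ¬ X80 := fun t => h28.2.2.2 ⟨p77, t⟩
              have p64 : X64 := h31.1.resolve_right (fun o => o.elim n73 n82)
              have p31 : X31 := h4.1.resolve_right (fun o => o.elim n32 n135)
              exact h6.2.1 ⟨p31, p64⟩
            · -- X79 false
              have p84 : X84 := (h3.1.resolve_left n29).resolve_left n79
              rcases Classical.em (X31) with p31 | n31
              · -- X31 true
                have n32 : ¬ X32 := fun t => h4.2.1 ⟨p31, t⟩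
                have n52 : ¬ X52 := fun t => h5.2.1 ⟨p31, t⟩
                have n64 : ¬ X64 := fun t => h6.2.1 ⟨p31, t⟩
                have p82 : X82 := (h7.1.resolve_left n32).resolve_left n79
                have n77 : ¬ X77 := fun t => h24.2.2.2 ⟨t, p82⟩
                have p47 : X47 := h25.1.resolve_right (fun o => o.elim n64 n97)
                have p80 : X80 := (h28.1.resolve_left n52).resolve_left n77
                have n38 : ¬ X38 := fun t => h12.2.1 ⟨t, p47⟩
                have n115 : ¬ X115 := fun t => h12.2.2.2 ⟨p47, t⟩
                have p87 : X87 := (h14.1.resolve_left n38).resolve_left n73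
                have p39 : X39 := h15.1.resolve_right (fun o => o.elim n46 n115)
                have n55 : ¬ X55 := fun t => h16.2.1 ⟨p39, t⟩
                have n107 : ¬ X107 := fun t => h16.2.2.1 ⟨p39, t⟩
                exact h17.2.2.1 ⟨p39, p87⟩
              · -- X31 false
                have p32 : X32 := (h4.1.resolve_left n31).resolve_right n135
                have p52 : X52 := (h5.1.resolve_left n31).resolve_right n118
                have p64 : X64 := (h6.1.resolve_left n31).resolve_right n101
                have n82 : ¬ X82 := fun t => h7.2.2.1 ⟨p32, t⟩
                have p77 : X77 := (h24.1.resolve_left n46).resolve_right n82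
                have n47 : ¬ X47 := fun t => h25.2.1 ⟨t, p64⟩
                have n51 : ¬ X51 := fun t => h26.2.1 ⟨t, p52⟩
                have n107 : ¬ X107 := fun t => h26.2.2.2 ⟨p52, t⟩
                have p63 : X63 := (h27.1.resolve_left n51).resolve_right n97
                exact h28.2.1 ⟨p52, p77⟩
          · -- X35 false
            have p135 : X135 := (h2.1.resolve_left n29).resolve_left n35
            have n31 : ¬ X31 := fun t => h4.2.2.1 ⟨t, p135⟩
            have n32 : ¬ X32 := fun t => h4.2.2.2 ⟨t, p135⟩
            have p64 : X64 := (h6.1.resolve_left n31).resolve_right n101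
            have p73 : X73 := (h11.1.resolve_left n35).resolve_right n90
            have n38 : ¬ X38 := fun t => h14.2.1 ⟨t, p73⟩
            have n87 : ¬ X87 := fun t => h14.2.2.2 ⟨p73, t⟩
            have n40 : ¬ X40 := fun t => h18.2.1 ⟨t, p73⟩
            have n85 : ¬ X85 := fun t => h18.2.2.2 ⟨p73, t⟩
            have n47 : ¬ X47 := fun t => h25.2.1 ⟨t, p64⟩
            have n54 : ¬ X54 := fun t => h29.2.1 ⟨t, p64⟩
            have n96 : ¬ X96 := fun t => h29.2.2.2 ⟨p64, t⟩
            exact h31.2.1 ⟨p64, p73⟩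
      · -- X75 false
        have p97 : X97 := (h1.1.resolve_left n13).resolve_left n75
        have p34 : X34 := h9.1.resolve_right (fun o => o.elim n75 n90)
        have n44 : ¬ X44 := fun t => h23.2.2.1 ⟨t, p97⟩
        have n65 : ¬ X65 := fun t => h23.2.2.2 ⟨t, p97⟩
        have n47 : ¬ X47 := fun t => h25.2.2.1 ⟨t, p97⟩
        have n64 : ¬ X64 := fun t => h25.2.2.2 ⟨t, p97⟩
        have n51 : ¬ X51 := fun t => h27.2.2.1 ⟨t, p97⟩
        have n63 : ¬ X63 := fun t => h27.2.2.2 ⟨t, p97⟩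
        have p31 : X31 := h6.1.resolve_right (fun o => o.elim n64 n101)
        have n57 : ¬ X57 := fun t => h8.2.1 ⟨p34, t⟩
        have n107 : ¬ X107 := fun t => h8.2.2.1 ⟨p34, t⟩
        have p52 : X52 := (h26.1.resolve_left n51).resolve_right n107
        have n77 : ¬ X77 := fun t => h28.2.1 ⟨p52, t⟩
        have n80 : ¬ X80 := fun t => h28.2.2.1 ⟨p52, t⟩
        have p96 : X96 := (h30.1.resolve_left n57).resolve_left n63
        have n32 : ¬ X32 := fun t => h4.2.1 ⟨p31, t⟩
        have n135 : ¬ X135 := fun t => h4.2.2.1 ⟨p31, t⟩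
        exact h5.2.1 ⟨p31, p52⟩
  · -- X3 false
    rcases Classical.em (X90) with p90 | n90
    · -- X90 true
      have n101 : ¬ X101 := fun t => h0.2.2.2 ⟨p90, t⟩
      have n34 : ¬ X34 := fun t => h9.2.2.1 ⟨t, p90⟩
      have n75 : ¬ X75 := fun t => h9.2.2.2 ⟨t, p90⟩
      have n35 : ¬ X35 := fun t => h11.2.2.1 ⟨t, p90⟩
      have n73 : ¬ X73 := fun t => h11.2.2.2 ⟨t, p90⟩
      rcases Classical.em (X13) with p13 | n13
      · -- X13 true
        have n97 : ¬ X97 := fun t => h1.2.2.1 ⟨p13, t⟩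
        rcases Classical.em (X29) with p29 | n29
        · -- X29 true
          have n135 : ¬ X135 := fun t => h2.2.2.1 ⟨p29, t⟩
          have n79 : ¬ X79 := fun t => h3.2.1 ⟨p29, t⟩
          have n84 : ¬ X84 := fun t => h3.2.2.1 ⟨p29, t⟩
          rcases Classical.em (X31) with p31 | n31
          · -- X31 true
            have n32 : ¬ X32 := fun t => h4.2.1 ⟨p31, t⟩
            have n52 : ¬ X52 := fun t => h5.2.1 ⟨p31, t⟩
            have n118 : ¬ X118 := fun t => h5.2.2.1 ⟨p31, t⟩
            have n64 : ¬ X64 := fun t => h6.2.1 ⟨p31, t⟩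
            have p82 : X82 := (h7.1.resolve_left n32).resolve_left n79
            have p46 : X46 := (h10.1.resolve_left n35).resolve_right n118
            have n39 : ¬ X39 := fun t => h15.2.1 ⟨t, p46⟩
            have n115 : ¬ X115 := fun t => h15.2.2.2 ⟨p46, t⟩
            exact h24.2.2.1 ⟨p46, p82⟩
          · -- X31 false
            have p32 : X32 := (h4.1.resolve_left n31).resolve_right n135
            have p64 : X64 := (h6.1.resolve_left n31).resolve_right n101
            have n82 : ¬ X82 := fun t => h7.2.2.1 ⟨p32, t⟩
            have n47 : ¬ X47 := fun t => h25.2.1 ⟨t, p64⟩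
            have n54 : ¬ X54 := fun t => h29.2.1 ⟨t, p64⟩
            have n96 : ¬ X96 := fun t => h29.2.2.2 ⟨p64, t⟩
            rcases Classical.em (X52) with p52 | n52
            · -- X52 true
              have n118 : ¬ X118 := fun t => h5.2.2.2 ⟨p52, t⟩
              have p46 : X46 := (h10.1.resolve_left n35).resolve_right n118
              have n39 : ¬ X39 := fun t => h15.2.1 ⟨t, p46⟩
              have n115 : ¬ X115 := fun t => h15.2.2.2 ⟨p46, t⟩
              have n77 : ¬ X77 := fun t => h24.2.1 ⟨p46, t⟩
              have n51 : ¬ X51 := fun t => h26.2.1 ⟨t, p52⟩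
              have n107 : ¬ X107 := fun t => h26.2.2.2 ⟨p52, t⟩
              have p63 : X63 := (h27.1.resolve_left n51).resolve_right n97
              have n80 : ¬ X80 := fun t => h28.2.2.1 ⟨p52, t⟩
              have n57 : ¬ X57 := fun t => h30.2.1 ⟨t, p63⟩
              exact (h8.1.resolve_left n34).elim n57 n107
            · -- X52 false
              have p118 : X118 := (h5.1.resolve_left n31).resolve_left n52
              have n46 : ¬ X46 := fun t => h10.2.2.2 ⟨t, p118⟩
              have p77 : X77 := (h24.1.resolve_left n46).resolve_right n82
              have n80 : ¬ X80 := fun t => h28.2.2.2 ⟨p77, t⟩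
              rcases Classical.em (X57) with p57 | n57
              · -- X57 true
                have n107 : ¬ X107 := fun t => h8.2.2.2 ⟨p57, t⟩
                have n38 : ¬ X38 := fun t => h13.2.1 ⟨t, p57⟩
                have n105 : ¬ X105 := fun t => h13.2.2.2 ⟨p57, t⟩
                have p87 : X87 := (h14.1.resolve_left n38).resolve_left n73
                have n39 : ¬ X39 := fun t => h17.2.2.1 ⟨t, p87⟩
                have n72 : ¬ X72 := fun t => h17.2.2.2 ⟨t, p87⟩
                have p43 : X43 := h22.1.resolve_right (fun o => o.elim n54 n105)
                have p51 : X51 := h26.1.resolve_right (fun o => o.elim n52 n107)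
                have n63 : ¬ X63 := fun t => h27.2.1 ⟨p51, t⟩
                have n65 : ¬ X65 := fun t => h32.2.2.1 ⟨t, p87⟩
                have n69 : ¬ X69 := fun t => h32.2.2.2 ⟨t, p87⟩
                have p115 : X115 := (h12.1.resolve_left n38).resolve_left n47
                have p55 : X55 := (h16.1.resolve_left n39).resolve_right n107
                exact h21.2.2.1 ⟨p43, p115⟩
              · -- X57 false
                have p107 : X107 := (h8.1.resolve_left n34).resolve_left n57
                have n39 : ¬ X39 := fun t => h16.2.2.1 ⟨t, p107⟩
                have n55 : ¬ X55 := fun t => h16.2.2.2 ⟨t, p107⟩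
                have n51 : ¬ X51 := fun t => h26.2.2.1 ⟨t, p107⟩
                have p63 : X63 := (h27.1.resolve_left n51).resolve_right n97
                have p115 : X115 := (h15.1.resolve_left n39).resolve_left n46
                have n43 : ¬ X43 := fun t => h21.2.2.1 ⟨t, p115⟩
                have n44 : ¬ X44 := fun t => h21.2.2.2 ⟨t, p115⟩
                have p105 : X105 := (h22.1.resolve_left n43).resolve_left n54
                have p65 : X65 := (h23.1.resolve_left n44).resolve_right n97
                have n69 : ¬ X69 := fun t => h32.2.1 ⟨p65, t⟩
                have n87 : ¬ X87 := fun t => h32.2.2.1 ⟨p65, t⟩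
                have n38 : ¬ X38 := fun t => h12.2.2.1 ⟨t, p115⟩
                exact (h14.1.resolve_left n38).elim n73 n87
        · -- X29 false
          have p135 : X135 := (h2.1.resolve_left n29).resolve_left n35
          have n31 : ¬ X31 := fun t => h4.2.2.1 ⟨t, p135⟩
          have n32 : ¬ X32 := fun t => h4.2.2.2 ⟨t, p135⟩
          have p64 : X64 := (h6.1.resolve_left n31).resolve_right n101
          have n47 : ¬ X47 := fun t => h25.2.1 ⟨t, p64⟩
          have n54 : ¬ X54 := fun t => h29.2.1 ⟨t, p64⟩
          have n96 : ¬ X96 := fun t => h29.2.2.2 ⟨p64, t⟩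
          have n82 : ¬ X82 := fun t => h31.2.2.1 ⟨p64, t⟩
          have p79 : X79 := (h7.1.resolve_left n32).resolve_right n82
          have n84 : ¬ X84 := fun t => h3.2.2.2 ⟨p79, t⟩
          rcases Classical.em (X52) with p52 | n52
          · -- X52 true
            have n118 : ¬ X118 := fun t => h5.2.2.2 ⟨p52, t⟩
            have p46 : X46 := (h10.1.resolve_left n35).resolve_right n118
            have n39 : ¬ X39 := fun t => h15.2.1 ⟨t, p46⟩
            have n115 : ¬ X115 := fun t => h15.2.2.2 ⟨p46, t⟩
            have n77 : ¬ X77 := fun t => h24.2.1 ⟨p46, t⟩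
            have n51 : ¬ X51 := fun t => h26.2.1 ⟨t, p52⟩
            have n107 : ¬ X107 := fun t => h26.2.2.2 ⟨p52, t⟩
            have p63 : X63 := (h27.1.resolve_left n51).resolve_right n97
            have n80 : ¬ X80 := fun t => h28.2.2.1 ⟨p52, t⟩
            have n57 : ¬ X57 := fun t => h30.2.1 ⟨t, p63⟩
            exact (h8.1.resolve_left n34).elim n57 n107
          · -- X52 false
            have p118 : X118 := (h5.1.resolve_left n31).resolve_left n52
            have n46 : ¬ X46 := fun t => h10.2.2.2 ⟨t, p118⟩
            have p77 : X77 := (h24.1.resolve_left n46).resolve_right n82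
            have n80 : ¬ X80 := fun t => h28.2.2.2 ⟨p77, t⟩
            rcases Classical.em (X57) with p57 | n57
            · -- X57 true
              have n107 : ¬ X107 := fun t => h8.2.2.2 ⟨p57, t⟩
              have n38 : ¬ X38 := fun t => h13.2.1 ⟨t, p57⟩
              have n105 : ¬ X105 := fun t => h13.2.2.2 ⟨p57, t⟩
              have p87 : X87 := (h14.1.resolve_left n38).resolve_left n73
              have n39 : ¬ X39 := fun t => h17.2.2.1 ⟨t, p87⟩
              have n72 : ¬ X72 := fun t => h17.2.2.2 ⟨t, p87⟩
              have p43 : X43 := h22.1.resolve_right (fun o => o.elim n54 n105)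
              have p51 : X51 := h26.1.resolve_right (fun o => o.elim n52 n107)
              have n63 : ¬ X63 := fun t => h27.2.1 ⟨p51, t⟩
              have n65 : ¬ X65 := fun t => h32.2.2.1 ⟨t, p87⟩
              have n69 : ¬ X69 := fun t => h32.2.2.2 ⟨t, p87⟩
              have p115 : X115 := (h12.1.resolve_left n38).resolve_left n47
              have p55 : X55 := (h16.1.resolve_left n39).resolve_right n107
              exact h21.2.2.1 ⟨p43, p115⟩
            · -- X57 false
              have p107 : X107 := (h8.1.resolve_left n34).resolve_left n57
              have n39 : ¬ X39 := fun t => h16.2.2.1 ⟨t, p107⟩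
              have n55 : ¬ X55 := fun t => h16.2.2.2 ⟨t, p107⟩
              have n51 : ¬ X51 := fun t => h26.2.2.1 ⟨t, p107⟩
              have p63 : X63 := (h27.1.resolve_left n51).resolve_right n97
              have p115 : X115 := (h15.1.resolve_left n39).resolve_left n46
              have n43 : ¬ X43 := fun t => h21.2.2.1 ⟨t, p115⟩
              have n44 : ¬ X44 := fun t => h21.2.2.2 ⟨t, p115⟩
              have p105 : X105 := (h22.1.resolve_left n43).resolve_left n54
              have p65 : X65 := (h23.1.resolve_left n44).resolve_right n97
              have n69 : ¬ X69 := fun t => h32.2.1 ⟨p65, t⟩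
              have n87 : ¬ X87 := fun t => h32.2.2.1 ⟨p65, t⟩
              have n38 : ¬ X38 := fun t => h12.2.2.1 ⟨t, p115⟩
              exact (h14.1.resolve_left n38).elim n73 n87
      · -- X13 false
        have p97 : X97 := (h1.1.resolve_left n13).resolve_left n75
        have n44 : ¬ X44 := fun t => h23.2.2.1 ⟨t, p97⟩
        have n65 : ¬ X65 := fun t => h23.2.2.2 ⟨t, p97⟩
        have n47 : ¬ X47 := fun t => h25.2.2.1 ⟨t, p97⟩
        have n64 : ¬ X64 := fun t => h25.2.2.2 ⟨t, p97⟩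
        have n51 : ¬ X51 := fun t => h27.2.2.1 ⟨t, p97⟩
        have n63 : ¬ X63 := fun t => h27.2.2.2 ⟨t, p97⟩
        have p82 : X82 := (h31.1.resolve_left n64).resolve_left n73
        have p31 : X31 := h6.1.resolve_right (fun o => o.elim n64 n101)
        have n32 : ¬ X32 := fun t => h7.2.2.1 ⟨t, p82⟩
        have n79 : ¬ X79 := fun t => h7.2.2.2 ⟨t, p82⟩
        have n46 : ¬ X46 := fun t => h24.2.2.1 ⟨t, p82⟩
        have n77 : ¬ X77 := fun t => h24.2.2.2 ⟨t, p82⟩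
        have n135 : ¬ X135 := fun t => h4.2.2.1 ⟨p31, t⟩
        have n52 : ¬ X52 := fun t => h5.2.1 ⟨p31, t⟩
        have n118 : ¬ X118 := fun t => h5.2.2.1 ⟨p31, t⟩
        exact (h10.1.resolve_left n35).elim n46 n118
    · -- X90 false
      have p101 : X101 := (h0.1.resolve_left n3).resolve_left n90
      have n31 : ¬ X31 := fun t => h6.2.2.1 ⟨t, p101⟩
      have n64 : ¬ X64 := fun t => h6.2.2.2 ⟨t, p101⟩
      rcases Classical.em (X13) with p13 | n13
      · -- X13 true
        have n75 : ¬ X75 := fun t => h1.2.1 ⟨p13, t⟩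
        have n97 : ¬ X97 := fun t => h1.2.2.1 ⟨p13, t⟩
        have p34 : X34 := h9.1.resolve_right (fun o => o.elim n75 n90)
        have p47 : X47 := h25.1.resolve_right (fun o => o.elim n64 n97)
        have n57 : ¬ X57 := fun t => h8.2.1 ⟨p34, t⟩
        have n107 : ¬ X107 := fun t => h8.2.2.1 ⟨p34, t⟩
        have n38 : ¬ X38 := fun t => h12.2.1 ⟨t, p47⟩
        have n115 : ¬ X115 := fun t => h12.2.2.2 ⟨p47, t⟩
        have p105 : X105 := (h13.1.resolve_left n38).resolve_left n57
        have n41 : ¬ X41 := fun t => h19.2.1 ⟨t, p47⟩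
        have n113 : ¬ X113 := fun t => h19.2.2.2 ⟨p47, t⟩
        have n43 : ¬ X43 := fun t => h22.2.2.1 ⟨t, p105⟩
        have n54 : ¬ X54 := fun t => h22.2.2.2 ⟨t, p105⟩
        have p96 : X96 := (h29.1.resolve_left n54).resolve_left n64
        have n63 : ¬ X63 := fun t => h30.2.2.2 ⟨t, p96⟩
        have p44 : X44 := (h21.1.resolve_left n43).resolve_right n115
        have n65 : ¬ X65 := fun t => h23.2.1 ⟨p44, t⟩
        have p51 : X51 := h27.1.resolve_right (fun o => o.elim n63 n97)
        have n52 : ¬ X52 := fun t => h26.2.1 ⟨p51, t⟩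
        have p118 : X118 := (h5.1.resolve_left n31).resolve_left n52
        have n35 : ¬ X35 := fun t => h10.2.2.1 ⟨t, p118⟩
        have n46 : ¬ X46 := fun t => h10.2.2.2 ⟨t, p118⟩
        have p73 : X73 := (h11.1.resolve_left n35).resolve_right n90
        have n87 : ¬ X87 := fun t => h14.2.2.2 ⟨p73, t⟩
        have p39 : X39 := h15.1.resolve_right (fun o => o.elim n46 n115)
        have n55 : ¬ X55 := fun t => h16.2.1 ⟨p39, t⟩
        have n72 : ¬ X72 := fun t => h17.2.1 ⟨p39, t⟩
        have n40 : ¬ X40 := fun t => h18.2.1 ⟨t, p73⟩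
        have n85 : ¬ X85 := fun t => h18.2.2.2 ⟨p73, t⟩
        exact (h20.1.resolve_left n41).elim n72 n85
      · -- X13 false
        rcases Classical.em (X75) with p75 | n75
        · -- X75 true
          have n97 : ¬ X97 := fun t => h1.2.2.2 ⟨p75, t⟩
          have n34 : ¬ X34 := fun t => h9.2.1 ⟨t, p75⟩
          have p47 : X47 := h25.1.resolve_right (fun o => o.elim n64 n97)
          have n38 : ¬ X38 := fun t => h12.2.1 ⟨t, p47⟩
          have n115 : ¬ X115 := fun t => h12.2.2.2 ⟨p47, t⟩
          have n41 : ¬ X41 := fun t => h19.2.1 ⟨t, p47⟩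
          have n113 : ¬ X113 := fun t => h19.2.2.2 ⟨p47, t⟩
          rcases Classical.em (X29) with p29 | n29
          · -- X29 true
            have n35 : ¬ X35 := fun t => h2.2.1 ⟨p29, t⟩
            have n135 : ¬ X135 := fun t => h2.2.2.1 ⟨p29, t⟩
            have n79 : ¬ X79 := fun t => h3.2.1 ⟨p29, t⟩
            have n84 : ¬ X84 := fun t => h3.2.2.1 ⟨p29, t⟩
            have p32 : X32 := (h4.1.resolve_left n31).resolve_right n135
            have n82 : ¬ X82 := fun t => h7.2.2.1 ⟨p32, t⟩
            have p73 : X73 := (h11.1.resolve_left n35).resolve_right n90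
            have n87 : ¬ X87 := fun t => h14.2.2.2 ⟨p73, t⟩
            have n40 : ¬ X40 := fun t => h18.2.1 ⟨t, p73⟩
            have n85 : ¬ X85 := fun t => h18.2.2.2 ⟨p73, t⟩
            have p72 : X72 := (h20.1.resolve_left n41).resolve_right n85
            have n39 : ¬ X39 := fun t => h17.2.1 ⟨t, p72⟩
            have p46 : X46 := (h15.1.resolve_left n39).resolve_right n115
            have n77 : ¬ X77 := fun t => h24.2.1 ⟨p46, t⟩
            have n118 : ¬ X118 := fun t => h10.2.2.2 ⟨p46, t⟩
            have p52 : X52 := (h5.1.resolve_left n31).resolve_right n118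
            have n51 : ¬ X51 := fun t => h26.2.1 ⟨t, p52⟩
            have n107 : ¬ X107 := fun t => h26.2.2.2 ⟨p52, t⟩
            have p63 : X63 := (h27.1.resolve_left n51).resolve_right n97
            have n80 : ¬ X80 := fun t => h28.2.2.1 ⟨p52, t⟩
            have n57 : ¬ X57 := fun t => h30.2.1 ⟨t, p63⟩
            have n96 : ¬ X96 := fun t => h30.2.2.2 ⟨p63, t⟩
            exact (h8.1.resolve_left n34).elim n57 n107
          · -- X29 false
            rcases Classical.em (X35) with p35 | n35
            · -- X35 true
              have n135 : ¬ X135 := fun t => h2.2.2.2 ⟨p35, t⟩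
              have p32 : X32 := (h4.1.resolve_left n31).resolve_right n135
              have n79 : ¬ X79 := fun t => h7.2.1 ⟨p32, t⟩
              have n82 : ¬ X82 := fun t => h7.2.2.1 ⟨p32, t⟩
              have n46 : ¬ X46 := fun t => h10.2.1 ⟨p35, t⟩
              have n118 : ¬ X118 := fun t => h10.2.2.1 ⟨p35, t⟩
              have n73 : ¬ X73 := fun t => h11.2.1 ⟨p35, t⟩
              have p87 : X87 := (h14.1.resolve_left n38).resolve_left n73
              have p39 : X39 := h15.1.resolve_right (fun o => o.elim n46 n115)
              have n55 : ¬ X55 := fun t => h16.2.1 ⟨p39, t⟩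
              have n107 : ¬ X107 := fun t => h16.2.2.1 ⟨p39, t⟩
              exact h17.2.2.1 ⟨p39, p87⟩
            · -- X35 false
              have p135 : X135 := (h2.1.resolve_left n29).resolve_left n35
              have n32 : ¬ X32 := fun t => h4.2.2.2 ⟨t, p135⟩
              have p73 : X73 := (h11.1.resolve_left n35).resolve_right n90
              have n87 : ¬ X87 := fun t => h14.2.2.2 ⟨p73, t⟩
              have n40 : ¬ X40 := fun t => h18.2.1 ⟨t, p73⟩
              have n85 : ¬ X85 := fun t => h18.2.2.2 ⟨p73, t⟩
              have p72 : X72 := (h20.1.resolve_left n41).resolve_right n85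
              have n82 : ¬ X82 := fun t => h31.2.2.2 ⟨p73, t⟩
              have p79 : X79 := (h7.1.resolve_left n32).resolve_right n82
              have n39 : ¬ X39 := fun t => h17.2.1 ⟨t, p72⟩
              have n84 : ¬ X84 := fun t => h3.2.2.2 ⟨p79, t⟩
              have p46 : X46 := (h15.1.resolve_left n39).resolve_right n115
              have n77 : ¬ X77 := fun t => h24.2.1 ⟨p46, t⟩
              have n118 : ¬ X118 := fun t => h10.2.2.2 ⟨p46, t⟩
              have p52 : X52 := (h5.1.resolve_left n31).resolve_right n118
              have n51 : ¬ X51 := fun t => h26.2.1 ⟨t, p52⟩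
              have n107 : ¬ X107 := fun t => h26.2.2.2 ⟨p52, t⟩
              have p63 : X63 := (h27.1.resolve_left n51).resolve_right n97
              have n80 : ¬ X80 := fun t => h28.2.2.1 ⟨p52, t⟩
              have n57 : ¬ X57 := fun t => h30.2.1 ⟨t, p63⟩
              have n96 : ¬ X96 := fun t => h30.2.2.2 ⟨p63, t⟩
              exact (h8.1.resolve_left n34).elim n57 n107
        · -- X75 false
          have p97 : X97 := (h1.1.resolve_left n13).resolve_left n75
          have p34 : X34 := h9.1.resolve_right (fun o => o.elim n75 n90)
          have n44 : ¬ X44 := fun t => h23.2.2.1 ⟨t, p97⟩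
          have n65 : ¬ X65 := fun t => h23.2.2.2 ⟨t, p97⟩
          have n47 : ¬ X47 := fun t => h25.2.2.1 ⟨t, p97⟩
          have n51 : ¬ X51 := fun t => h27.2.2.1 ⟨t, p97⟩
          have n63 : ¬ X63 := fun t => h27.2.2.2 ⟨t, p97⟩
          have n57 : ¬ X57 := fun t => h8.2.1 ⟨p34, t⟩
          have n107 : ¬ X107 := fun t => h8.2.2.1 ⟨p34, t⟩
          have p52 : X52 := (h26.1.resolve_left n51).resolve_right n107
          have n77 : ¬ X77 := fun t => h28.2.1 ⟨p52, t⟩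
          have n80 : ¬ X80 := fun t => h28.2.2.1 ⟨p52, t⟩
          have p96 : X96 := (h30.1.resolve_left n57).resolve_left n63
          have n118 : ¬ X118 := fun t => h5.2.2.2 ⟨p52, t⟩
          have n54 : ¬ X54 := fun t => h29.2.2.1 ⟨t, p96⟩
          rcases Classical.em (X29) with p29 | n29
          · -- X29 true
            have n35 : ¬ X35 := fun t => h2.2.1 ⟨p29, t⟩
            have n135 : ¬ X135 := fun t => h2.2.2.1 ⟨p29, t⟩
            have n79 : ¬ X79 := fun t => h3.2.1 ⟨p29, t⟩
            have n84 : ¬ X84 := fun t => h3.2.2.1 ⟨p29, t⟩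
            have p32 : X32 := (h4.1.resolve_left n31).resolve_right n135
            have n82 : ¬ X82 := fun t => h7.2.2.1 ⟨p32, t⟩
            have p46 : X46 := (h10.1.resolve_left n35).resolve_right n118
            have p73 : X73 := (h11.1.resolve_left n35).resolve_right n90
            have n38 : ¬ X38 := fun t => h14.2.1 ⟨t, p73⟩
            have n87 : ¬ X87 := fun t => h14.2.2.2 ⟨p73, t⟩
            have n39 : ¬ X39 := fun t => h15.2.1 ⟨t, p46⟩
            have n115 : ¬ X115 := fun t => h15.2.2.2 ⟨p46, t⟩
            have p55 : X55 := (h16.1.resolve_left n39).resolve_right n107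
            have p72 : X72 := (h17.1.resolve_left n39).resolve_right n87
            have n40 : ¬ X40 := fun t => h18.2.1 ⟨t, p73⟩
            have n85 : ¬ X85 := fun t => h18.2.2.2 ⟨p73, t⟩
            have n41 : ¬ X41 := fun t => h20.2.1 ⟨t, p72⟩
            have p43 : X43 := h21.1.resolve_right (fun o => o.elim n44 n115)
            have n105 : ¬ X105 := fun t => h22.2.2.1 ⟨p43, t⟩
            have p69 : X69 := (h32.1.resolve_left n65).resolve_right n87
            exact (h12.1.resolve_left n38).elim n47 n115
          · -- X29 false
            rcases Classical.em (X35) with p35 | n35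
            · -- X35 true
              have n135 : ¬ X135 := fun t => h2.2.2.2 ⟨p35, t⟩
              have p32 : X32 := (h4.1.resolve_left n31).resolve_right n135
              have n79 : ¬ X79 := fun t => h7.2.1 ⟨p32, t⟩
              have n82 : ¬ X82 := fun t => h7.2.2.1 ⟨p32, t⟩
              have n46 : ¬ X46 := fun t => h10.2.1 ⟨p35, t⟩
              have n73 : ¬ X73 := fun t => h11.2.1 ⟨p35, t⟩
              exact (h24.1.resolve_left n46).elim n77 n82
            · -- X35 false
              have p135 : X135 := (h2.1.resolve_left n29).resolve_left n35
              have n32 : ¬ X32 := fun t => h4.2.2.2 ⟨t, p135⟩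
              have p46 : X46 := (h10.1.resolve_left n35).resolve_right n118
              have p73 : X73 := (h11.1.resolve_left n35).resolve_right n90
              have n38 : ¬ X38 := fun t => h14.2.1 ⟨t, p73⟩
              have n87 : ¬ X87 := fun t => h14.2.2.2 ⟨p73, t⟩
              have n39 : ¬ X39 := fun t => h15.2.1 ⟨t, p46⟩
              have n115 : ¬ X115 := fun t => h15.2.2.2 ⟨p46, t⟩
              have p55 : X55 := (h16.1.resolve_left n39).resolve_right n107
              have p72 : X72 := (h17.1.resolve_left n39).resolve_right n87
              have n40 : ¬ X40 := fun t => h18.2.1 ⟨t, p73⟩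
              have n85 : ¬ X85 := fun t => h18.2.2.2 ⟨p73, t⟩
              have n41 : ¬ X41 := fun t => h20.2.1 ⟨t, p72⟩
              have p43 : X43 := h21.1.resolve_right (fun o => o.elim n44 n115)
              have n105 : ¬ X105 := fun t => h22.2.2.1 ⟨p43, t⟩
              have n82 : ¬ X82 := fun t => h24.2.2.1 ⟨p46, t⟩
              have p69 : X69 := (h32.1.resolve_left n65).resolve_right n87
              have p79 : X79 := (h7.1.resolve_left n32).resolve_right n82
              exact (h12.1.resolve_left n38).elim n47 n115




section Machinery

variable {M : Type u} [Ring M]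

/-- A compatible family of prime-spectrum points for all commutative rings mapping to `M`. -/
structure PtData (M : Type u) [Ring M] : Type (u + 1) where
  P : ∀ (A : Type u) [CommRing A], (A →+* M) → PrimeSpectrum A
  nat : ∀ {A B : Type u} [CommRing A] [CommRing B] (g : A →+* B) (f : B →+* M),
    P A (f.comp g) = PrimeSpectrum.comap g (P B f)

abbrev Z1 : Type u := ULift.{u} ℤ
abbrev Z2 : Type u := ULift.{u} (ℤ × ℤ)
abbrev Z3 : Type u := ULift.{u} (ℤ × ℤ × ℤ)

lemma key_smul_mul (x y : ℤ) (a b : M) : (x • a) * (y • b) = (x * y) • (a * b) :=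
  smul_mul_smul_comm x a y b

/-- The ring hom `ℤ × ℤ × ℤ →+* M` attached to a complete orthogonal triple of idempotents. -/
def tHom (a b c : M) (ha : a * a = a) (hb : b * b = b) (hc : c * c = c)
    (hab : a * b = 0) (hba : b * a = 0) (hac : a * c = 0) (hca : c * a = 0)
    (hbc : b * c = 0) (hcb : c * b = 0) (hsum : a + b + c = 1) : Z3.{u} →+* M where
  toFun x := x.down.1 • a + x.down.2.1 • b + x.down.2.2 • c
  map_one' := by simp [hsum]
  map_mul' x y := by
    simp only [add_mul, mul_add, key_smul_mul, ha, hb, hc, hab, hba, hac, hca, hbc, hcb,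
      smul_zero, add_zero, zero_add]
    rfl
  map_zero' := by simp
  map_add' x y := by
    simp only [ULift.add_down, Prod.fst_add, Prod.snd_add, add_smul]
    abel

/-- The ring hom `ℤ × ℤ →+* M` attached to an idempotent. -/
def iHom (e : M) (he : e * e = e) : Z2.{u} →+* M where
  toFun x := x.down.1 • e + x.down.2 • (1 - e)
  map_one' := by simp
  map_mul' x y := by
    have h1 : e * (1 - e) = 0 := by rw [mul_sub, mul_one, he, sub_self]
    have h2 : (1 - e) * e = 0 := by rw [sub_mul, one_mul, he, sub_self]
    have h3 : (1 - e) * (1 - e) = 1 - e := by rw [sub_mul, one_mul, mul_sub, mul_one, he]; abel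
    simp only [add_mul, mul_add, key_smul_mul, he, h1, h2, h3, smul_zero, add_zero, zero_add]
    rfl
  map_zero' := by simp
  map_add' x y := by
    simp only [ULift.add_down, Prod.fst_add, Prod.snd_add, add_smul]
    abel

/-- The coloring of an idempotent: "the point lies where `e` is 1". -/
def PtData.C (pd : PtData M) (e : M) (he : e * e = e) : Prop :=
  (ULift.up ((1 : ℤ), (0 : ℤ))) ∉ (pd.P Z2 (iHom e he)).asIdeal

end Machinery

section Master

variable {M : Type u} [Ring M]


lemma PtData.master (pd : PtData M) (a b c : M) (ha : a * a = a) (hb : b * b = b)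
    (hc : c * c = c) (hab : a * b = 0) (hba : b * a = 0) (hac : a * c = 0) (hca : c * a = 0)
    (hbc : b * c = 0) (hcb : c * b = 0) (hsum : a + b + c = 1)
    (hab2 : (a + b) * (a + b) = a + b) :
    EO (pd.C a ha) (pd.C b hb) (pd.C c hc) ∧ (pd.C (a + b) hab2 ↔ pd.C a ha ∨ pd.C b hb) := by
  set f : Z3.{u} →+* M := tHom a b c ha hb hc hab hba hac hca hbc hcb hsum with hf
  set q := pd.P Z3 f with hq
  set I := q.asIdeal with hI
  have hprime : I.IsPrime := q.isPrime
  have trans : ∀ (g : Z2.{u} →+* Z3.{u}) (e : M) (he : e * e = e),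
      f.comp g = iHom e he → (pd.C e he ↔ g (ULift.up (1, 0)) ∉ I) := by
    intro g e he heq
    unfold PtData.C
    rw [← heq, pd.nat g f, PrimeSpectrum.comap_asIdeal, Ideal.mem_comap]
  have hbc1 : b + c = 1 - a := by rw [← hsum]; abel
  have hc1 : c = 1 - (a + b) := by rw [← hsum]; abel
  let g1 : Z2.{u} →+* Z3.{u} :=
    { toFun := fun x => ULift.up (x.down.1, x.down.2, x.down.2)
      map_one' := rfl, map_mul' := fun _ _ => rfl, map_zero' := rfl
      map_add' := fun _ _ => rfl }
  let g2 : Z2.{u} →+* Z3.{u} :=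
    { toFun := fun x => ULift.up (x.down.2, x.down.1, x.down.2)
      map_one' := rfl, map_mul' := fun _ _ => rfl, map_zero' := rfl
      map_add' := fun _ _ => rfl }
  let g3 : Z2.{u} →+* Z3.{u} :=
    { toFun := fun x => ULift.up (x.down.2, x.down.2, x.down.1)
      map_one' := rfl, map_mul' := fun _ _ => rfl, map_zero' := rfl
      map_add' := fun _ _ => rfl }
  let g12 : Z2.{u} →+* Z3.{u} :=
    { toFun := fun x => ULift.up (x.down.1, x.down.1, x.down.2)
      map_one' := rfl, map_mul' := fun _ _ => rfl, map_zero' := rfl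
      map_add' := fun _ _ => rfl }
  have hCa : pd.C a ha ↔ ULift.up (1, 0, 0) ∉ I := by
    refine trans g1 a ha ?_
    ext x
    show x.down.1 • a + x.down.2 • b + x.down.2 • c = x.down.1 • a + x.down.2 • (1 - a)
    rw [add_assoc, ← smul_add, hbc1]
  have hCb : pd.C b hb ↔ ULift.up (0, 1, 0) ∉ I := by
    refine trans g2 b hb ?_
    ext x
    show x.down.2 • a + x.down.1 • b + x.down.2 • c = x.down.1 • b + x.down.2 • (1 - b)
    have : a + c = 1 - b := by rw [← hsum]; abel
    rw [← this, smul_add]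
    abel
  have hCc : pd.C c hc ↔ ULift.up (0, 0, 1) ∉ I := by
    refine trans g3 c hc ?_
    ext x
    show x.down.2 • a + x.down.2 • b + x.down.1 • c = x.down.1 • c + x.down.2 • (1 - c)
    have : a + b = 1 - c := by rw [← hsum]; abel
    rw [← smul_add, this]
    abel
  have hCab : pd.C (a + b) hab2 ↔ ULift.up (1, 1, 0) ∉ I := by
    refine trans g12 (a + b) hab2 ?_
    ext x
    show x.down.1 • a + x.down.1 • b + x.down.2 • c = x.down.1 • (a + b) + x.down.2 • (1 - (a + b))
    rw [smul_add, ← hc1]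
  have hone : (ULift.up (1, 0, 0) : Z3.{u}) + ULift.up (0, 1, 0) + ULift.up (0, 0, 1) = 1 := rfl
  have hmem : ∀ x y : Z3.{u}, x * y = 0 → x ∉ I → y ∈ I := by
    intro x y hxy hx
    rcases hprime.mem_or_mem (show x * y ∈ I by rw [hxy]; exact I.zero_mem) with h | h
    · exact absurd h hx
    · exact h
  have hall : ¬ (ULift.up (1, 0, 0) ∈ I ∧ ULift.up (0, 1, 0) ∈ I ∧ ULift.up (0, 0, 1) ∈ I) := by
    rintro ⟨h1, h2, h3⟩
    exact hprime.ne_top (Ideal.eq_top_iff_one I |>.mpr (hone ▸ I.add_mem (I.add_mem h1 h2) h3))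
  constructor
  · refine ⟨?_, ?_, ?_, ?_⟩
    · by_contra hno
      push_neg at hno
      obtain ⟨n1, n2, n3⟩ := hno
      rw [hCa, not_not] at n1
      rw [hCb, not_not] at n2
      rw [hCc, not_not] at n3
      exact hall ⟨n1, n2, n3⟩
    · rintro ⟨x1, x2⟩
      exact (hCb.mp x2) (hmem _ _ (by decide) (hCa.mp x1))
    · rintro ⟨x1, x3⟩
      exact (hCc.mp x3) (hmem _ _ (by decide) (hCa.mp x1))
    · rintro ⟨x2, x3⟩
      exact (hCc.mp x3) (hmem _ _ (by decide) (hCb.mp x2))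
  · rw [hCa, hCb, hCab]
    constructor
    · intro h
      by_contra hno
      push_neg at hno
      obtain ⟨n1, n2⟩ := hno
      exact h (show _ ∈ I from (by decide : (ULift.up (1,1,0) : Z3.{u}) = ULift.up (1,0,0) + ULift.up (0,1,0)) ▸ I.add_mem n1 n2)
    · rintro (h | h) hsum12
      · exact h (show ULift.up (1,0,0) ∈ I from
          (by decide : (ULift.up (1,1,0) : Z3.{u}) * ULift.up (1,0,0) = ULift.up (1,0,0)) ▸ I.mul_mem_right _ hsum12)
      · exact h (show ULift.up (0,1,0) ∈ I from
          (by decide : (ULift.up (1,1,0) : Z3.{u}) * ULift.up (0,1,0) = ULift.up (0,1,0)) ▸ I.mul_mem_right _ hsum12)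

end Master

section PartC

variable {M : Type u} [Ring M]

/-- The hom `Z1 →+* M`. -/
def oneHom : Z1.{u} →+* M where
  toFun x := x.down • (1 : M)
  map_one' := by simp
  map_mul' x y := by
    show (x.down * y.down) • (1 : M) = _
    rw [key_smul_mul, one_mul]
  map_zero' := by simp
  map_add' x y := by
    show (x.down + y.down) • (1 : M) = _
    rw [add_smul]

lemma PtData.C_one (pd : PtData M) : pd.C 1 (one_mul 1) := by
  let g : Z2.{u} →+* Z1.{u} :=
    { toFun := fun x => ULift.up x.down.1
      map_one' := rfl, map_mul' := fun _ _ => rfl, map_zero' := rfl,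
      map_add' := fun _ _ => rfl }
  have heq : (oneHom (M := M)).comp g = iHom 1 (one_mul 1) := by
    ext x
    show x.down.1 • (1 : M) = x.down.1 • 1 + x.down.2 • (1 - 1)
    simp
  unfold PtData.C
  rw [← heq, pd.nat g oneHom, PrimeSpectrum.comap_asIdeal, Ideal.mem_comap]
  show (1 : Z1.{u}) ∉ _
  intro hmem
  exact (pd.P Z1 oneHom).isPrime.ne_top (Ideal.eq_top_iff_one _ |>.mpr hmem)

lemma PtData.not_C_zero (pd : PtData M) : ¬ pd.C 0 (mul_zero 0) := by
  let g : Z2.{u} →+* Z1.{u} :=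
    { toFun := fun x => ULift.up x.down.2
      map_one' := rfl, map_mul' := fun _ _ => rfl, map_zero' := rfl,
      map_add' := fun _ _ => rfl }
  have heq : (oneHom (M := M)).comp g = iHom 0 (mul_zero 0) := by
    ext x
    show x.down.2 • (1 : M) = x.down.1 • 0 + x.down.2 • (1 - 0)
    simp
  unfold PtData.C
  rw [← heq, pd.nat g oneHom, PrimeSpectrum.comap_asIdeal, Ideal.mem_comap]
  intro hmem
  exact hmem (show (0 : Z1.{u}) ∈ _ from Submodule.zero_mem _)

/-- Splitting over a sum of two orthogonal idempotents. -/
lemma PtData.or_split (pd : PtData M) (e s : M) (he : e * e = e) (hs : s * s = s)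
    (hes : e * s = 0) (hse : s * e = 0) (hsum2 : (e + s) * (e + s) = e + s) :
    pd.C (e + s) hsum2 ↔ pd.C e he ∨ pd.C s hs := by
  have hc : (1 - (e + s)) * (1 - (e + s)) = 1 - (e + s) := by
    rw [sub_mul, one_mul, mul_sub, mul_one, hsum2]
    abel
  have hac : e * (1 - (e + s)) = 0 := by
    rw [mul_sub, mul_one, mul_add, he, hes]
    abel
  have hca : (1 - (e + s)) * e = 0 := by
    rw [sub_mul, one_mul, add_mul, he, hse]
    abel
  have hbc : s * (1 - (e + s)) = 0 := by
    rw [mul_sub, mul_one, mul_add, hs, hse]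
    abel
  have hcb : (1 - (e + s)) * s = 0 := by
    rw [sub_mul, one_mul, add_mul, hs, hes]
    abel
  have hsum : e + s + (1 - (e + s)) = 1 := by abel
  exact (pd.master e s (1 - (e + s)) he hs hc hes hse hac hca hbc hcb hsum hsum2).2

/-- The "exactly one" family constraint. -/
lemma PtData.eo (pd : PtData M) (a b c : M) (ha : a * a = a) (hb : b * b = b)
    (hc : c * c = c) (hab : a * b = 0) (hba : b * a = 0) (hac : a * c = 0) (hca : c * a = 0)
    (hbc : b * c = 0) (hcb : c * b = 0) (hsum : a + b + c = 1) :
    EO (pd.C a ha) (pd.C b hb) (pd.C c hc) := by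
  have hab2 : (a + b) * (a + b) = a + b := by
    rw [add_mul, mul_add, mul_add, ha, hb, hab, hba]
    abel
  exact (pd.master a b c ha hb hc hab hba hac hca hbc hcb hsum hab2).1

lemma PtData.C_congr (pd : PtData M) {x y : M} (h : x = y) (hx : x * x = x)
    (hy : y * y = y) : pd.C x hx ↔ pd.C y hy := by subst h; rfl

lemma PtData.exists_of_family (pd : PtData M) {ι : Type} [DecidableEq ι] (E : ι → M)
    (hidem : ∀ i, E i * E i = E i) (horth : ∀ i j, i ≠ j → E i * E j = 0) (s : Finset ι) :
    ∀ (hS : (∑ i ∈ s, E i) * (∑ i ∈ s, E i) = ∑ i ∈ s, E i),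
      pd.C (∑ i ∈ s, E i) hS → ∃ i ∈ s, pd.C (E i) (hidem i) := by
  induction s using Finset.induction_on with
  | empty =>
    intro hS hC
    exact absurd ((pd.C_congr Finset.sum_empty hS (mul_zero 0)).mp hC) pd.not_C_zero
  | @insert a s hanot ih =>
    have hsum_ins : ∑ i ∈ insert a s, E i = E a + ∑ i ∈ s, E i := Finset.sum_insert hanot
    intro hS hC
    have heS : E a * (∑ i ∈ s, E i) = 0 := by
      rw [Finset.mul_sum]
      exact Finset.sum_eq_zero fun i hi => horth a i (fun h => hanot (h ▸ hi))
    have hSe : (∑ i ∈ s, E i) * E a = 0 := by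
      rw [Finset.sum_mul]
      exact Finset.sum_eq_zero fun i hi => horth i a (fun h => hanot (h ▸ hi))
    have hS' : (E a + ∑ i ∈ s, E i) * (E a + ∑ i ∈ s, E i) = E a + ∑ i ∈ s, E i := by
      rw [← hsum_ins]; exact hS
    have hSS : (∑ i ∈ s, E i) * (∑ i ∈ s, E i) = ∑ i ∈ s, E i := by
      have expand : (E a + ∑ i ∈ s, E i) * (E a + ∑ i ∈ s, E i)
          = E a + (∑ i ∈ s, E i) * (∑ i ∈ s, E i) := by
        rw [add_mul, mul_add, mul_add, hidem a, heS, hSe]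
        abel
      have := hS'
      rw [expand] at this
      exact add_left_cancel this
    have hC' := (pd.C_congr hsum_ins hS hS').mp hC
    rcases (pd.or_split (E a) (∑ i ∈ s, E i) (hidem a) hSS heS hSe hS').mp hC' with h | h
    · exact ⟨a, Finset.mem_insert_self a s, h⟩
    · obtain ⟨i, hi, hCi⟩ := ih hSS h
      exact ⟨i, Finset.mem_insert_of_mem hi, hCi⟩

/-- Precompose a point datum with a ring homomorphism. -/
def PtData.comp (pd : PtData M) {M' : Type u} [Ring M'] (ψ : M' →+* M) : PtData M' where
  P A _ f := pd.P A (ψ.comp f)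
  nat g f := by
    show pd.P _ (ψ.comp (f.comp g)) = PrimeSpectrum.comap g (pd.P _ (ψ.comp f))
    rw [← RingHom.comp_assoc]
    exact pd.nat g (ψ.comp f)

lemma PtData.comp_C (pd : PtData M) {M' : Type u} [Ring M'] (ψ : M' →+* M) (e : M')
    (he : e * e = e) (he' : ψ e * ψ e = ψ e) :
    (pd.comp ψ).C e he ↔ pd.C (ψ e) he' := by
  have heq : ψ.comp (iHom e he) = iHom (ψ e) he' := by
    ext x
    show ψ (x.down.1 • e + x.down.2 • (1 - e)) = x.down.1 • ψ e + x.down.2 • (1 - ψ e)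
    rw [map_add, map_zsmul, map_zsmul, map_sub, _root_.map_one]
  unfold PtData.C
  show _ ∉ (pd.P Z2 (ψ.comp (iHom e he))).asIdeal ↔ _
  rw [heq]

end PartC

def toPtData (F : RingCat.{u}ᵒᵖ ⥤ Type u)
    (η : (forget₂ CommRingCat RingCat).op ⋙ F ≅ primeSpectrumFunctor.{u})
    (M : Type u) [Ring M] (p : F.obj (op (RingCat.of M))) : PtData M where
  P A _ f := η.hom.app (op (CommRingCat.of A)) (F.map (RingCat.ofHom f).op p)
  nat {A B} _ _ g f := by
    have hnat := ConcreteCategory.congr_hom (η.hom.naturality ((CommRingCat.ofHom g).op))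
      (F.map (RingCat.ofHom f).op p)
    have hcomp : F.map (RingCat.ofHom (f.comp g)).op p
        = ((forget₂ CommRingCat RingCat).op ⋙ F).map ((CommRingCat.ofHom g).op)
          (F.map (RingCat.ofHom f).op p) :=
      ConcreteCategory.congr_hom (F.map_comp (RingCat.ofHom f).op ((forget₂ CommRingCat RingCat).map
        (CommRingCat.ofHom g)).op) p
    simp only [types_comp_apply] at hnat
    show η.hom.app (op (CommRingCat.of A)) (F.map (RingCat.ofHom (f.comp g)).op p) = _
    rw [hcomp, hnat]
    rfl


section Emb
variable {R : Type u} [Ring R] {n : ℕ}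

def eqv (hn : 3 ≤ n) : Fin n ≃ Fin 3 ⊕ Fin (n - 3) :=
  (finCongr (by omega : n = 3 + (n - 3))).trans finSumFinEquiv.symm

lemma submx_add {l m k o : Type} [Ring R] (A B : Matrix k o R) (e₁ : l → k)
    (e₂ : m → o) :
    A.submatrix e₁ e₂ + B.submatrix e₁ e₂ = (A + B).submatrix e₁ e₂ := by
  ext i j
  simp

def emb (hn : 3 ≤ n) (a : Matrix (Fin 3) (Fin 3) ℤ) : Matrix (Fin n) (Fin n) R :=
  (Matrix.fromBlocks (a.map ((Int.castRingHom R : ℤ →+* R) : ℤ → R)) 0 0 0).submatrix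
    (eqv hn) (eqv hn)

lemma emb_mul (hn : 3 ≤ n) (a b : Matrix (Fin 3) (Fin 3) ℤ) :
    emb (R := R) hn a * emb hn b = emb hn (a * b) := by
  unfold emb
  rw [Matrix.submatrix_mul_equiv, Matrix.fromBlocks_multiply, Matrix.map_mul]
  simp

lemma emb_add (hn : 3 ≤ n) (a b : Matrix (Fin 3) (Fin 3) ℤ) :
    emb (R := R) hn a + emb hn b = emb hn (a + b) := by
  unfold emb
  rw [submx_add, Matrix.fromBlocks_add]
  congr 1 <;> simp [Matrix.map_add]

/-- The complementary corner idempotent. -/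
def Dmat (hn : 3 ≤ n) : Matrix (Fin n) (Fin n) R :=
  (Matrix.fromBlocks 0 0 0 1).submatrix (eqv hn) (eqv hn)

lemma emb_one_add_D (hn : 3 ≤ n) : emb (R := R) hn 1 + Dmat hn = 1 := by
  unfold emb Dmat
  rw [submx_add, Matrix.fromBlocks_add]
  have : (1 : Matrix (Fin 3) (Fin 3) ℤ).map ((Int.castRingHom R : ℤ →+* R) : ℤ → R)
      = (1 : Matrix (Fin 3) (Fin 3) R) := Matrix.map_one _ (by simp) (by simp)
  rw [this]
  simp only [add_zero, zero_add]
  rw [Matrix.fromBlocks_one]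
  exact Matrix.submatrix_one_equiv (eqv hn)

lemma D_mul_emb (hn : 3 ≤ n) (a : Matrix (Fin 3) (Fin 3) ℤ) :
    Dmat (R := R) hn * emb hn a = 0 := by
  unfold emb Dmat
  rw [Matrix.submatrix_mul_equiv, Matrix.fromBlocks_multiply]
  have : (0 : Matrix (Fin n) (Fin n) R) =
      (Matrix.fromBlocks 0 0 0 0 :
        Matrix (Fin 3 ⊕ Fin (n-3)) (Fin 3 ⊕ Fin (n-3)) R).submatrix (eqv hn) (eqv hn) := by
    simp
  rw [this]
  congr 1 <;> simp

lemma emb_mul_D (hn : 3 ≤ n) (a : Matrix (Fin 3) (Fin 3) ℤ) :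
    emb (R := R) hn a * Dmat hn = 0 := by
  unfold emb Dmat
  rw [Matrix.submatrix_mul_equiv, Matrix.fromBlocks_multiply]
  have : (0 : Matrix (Fin n) (Fin n) R) =
      (Matrix.fromBlocks 0 0 0 0 :
        Matrix (Fin 3 ⊕ Fin (n-3)) (Fin 3 ⊕ Fin (n-3)) R).submatrix (eqv hn) (eqv hn) := by
    simp
  rw [this]
  congr 1 <;> simp

lemma D_mul_D (hn : 3 ≤ n) : Dmat (R := R) hn * Dmat hn = Dmat hn := by
  unfold Dmat
  rw [Matrix.submatrix_mul_equiv, Matrix.fromBlocks_multiply]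
  congr 1 <;> simp

end Emb

section Diag
variable {R : Type u} [Ring R] {n : ℕ}

lemma sum_stdBasis [NeZero n] : ∑ i : Fin n, Matrix.single i i (1 : R) = 1 := by
  ext i j
  rw [Matrix.sum_apply]
  by_cases h : i = j
  · subst h
    rw [Finset.sum_eq_single i (fun b _ hb => by simp [Matrix.single, hb])
      (by simp)]
    simp [Matrix.single, Matrix.one_apply]
  · rw [Finset.sum_eq_zero fun b _ => ?_]
    · simp [Matrix.one_apply, h]
    · simp only [Matrix.single, Matrix.of_apply, ite_eq_right_iff, and_imp]
      rintro rfl rfl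
      exact absurd rfl h

lemma stdBasis_idem (i : Fin n) :
    Matrix.single i i (1 : R) * Matrix.single i i 1 = Matrix.single i i 1 := by
  rw [Matrix.single_mul_single_same, one_mul]

lemma stdBasis_orth {i j : Fin n} (h : i ≠ j) :
    Matrix.single i i (1 : R) * Matrix.single j j 1 = 0 := by
  rw [Matrix.single_mul_single_of_ne (h := h)]

/-- Conjugation by a permutation, as a ring hom. -/
def swapHom (σ : Equiv.Perm (Fin n)) :
    Matrix (Fin n) (Fin n) R →+* Matrix (Fin n) (Fin n) R where
  toFun X := X.submatrix σ σ
  map_one' := Matrix.submatrix_one_equiv σ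
  map_mul' X Y := (Matrix.submatrix_mul_equiv X Y σ σ σ).symm
  map_zero' := by ext i j; simp
  map_add' X Y := by ext i j; simp

lemma swapHom_stdBasis (σ : Equiv.Perm (Fin n)) (a : Fin n) :
    swapHom (R := R) σ (Matrix.single a a 1) = Matrix.single (σ.symm a) (σ.symm a) 1 := by
  show (Matrix.single a a (1 : R)).submatrix σ σ = _
  ext i j
  simp [Matrix.single, Equiv.symm_apply_eq]

lemma eqv_z (hn : 3 ≤ n) (z : Fin n) (h : (z : ℕ) = 0) : eqv hn z = Sum.inl 0 := by
  have h1 : finCongr (by omega : n = 3 + (n - 3)) z = Fin.castAdd (n - 3) (0 : Fin 3) := by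
    apply Fin.ext
    simpa using h
  show finSumFinEquiv.symm (finCongr _ z) = _
  rw [h1, finSumFinEquiv_symm_apply_castAdd]

lemma emb_stdBasis0 (hn : 3 ≤ n) (z : Fin n) (hz0 : (z : ℕ) = 0) :
    emb (R := R) hn (Matrix.single 0 0 1) = Matrix.single z z 1 := by
  have hz : eqv hn z = Sum.inl 0 := eqv_z hn z hz0
  have key : ∀ w, (z = w) ↔ (eqv hn w = Sum.inl 0) := fun w =>
    ⟨fun h => h ▸ hz, fun h => (eqv hn).injective (by rw [hz, h])⟩
  unfold emb
  ext i j
  rw [Matrix.submatrix_apply]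
  rcases hi : eqv hn i with i' | i' <;> rcases hj : eqv hn j with j' | j'
  · rw [Matrix.fromBlocks_apply₁₁]
    simp only [Matrix.map_apply, Matrix.single, Matrix.of_apply]
    simp only [key, hi, hj, Sum.inl.injEq]
    by_cases h1 : i' = 0 <;> by_cases h2 : j' = 0 <;>
      simp [h1, h2, eq_comm]
  · rw [Matrix.fromBlocks_apply₁₂]
    simp only [Matrix.zero_apply, Matrix.single, Matrix.of_apply]
    simp [key, hj]
  · rw [Matrix.fromBlocks_apply₂₁]
    simp only [Matrix.zero_apply, Matrix.single, Matrix.of_apply]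
    simp [key, hi]
  · rw [Matrix.fromBlocks_apply₂₂]
    simp only [Matrix.zero_apply, Matrix.single, Matrix.of_apply]
    simp [key, hi]

end Diag

section Fam
variable {R : Type u} [Ring R] {n : ℕ}

lemma emb_zero (hn : 3 ≤ n) : emb (R := R) hn 0 = 0 := by
  unfold emb
  ext i j
  rcases (eqv hn) i with i' | i' <;> rcases (eqv hn) j with j' | j' <;> simp

lemma embIdem (hn : 3 ≤ n) {a : Matrix (Fin 3) (Fin 3) ℤ} (h : a * a = a) :
    emb (R := R) hn a * emb hn a = emb hn a := by rw [emb_mul, h]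

lemma embOrth (hn : 3 ≤ n) {a b : Matrix (Fin 3) (Fin 3) ℤ} (h : a * b = 0) :
    emb (R := R) hn a * emb hn b = 0 := by rw [emb_mul, h, emb_zero]

end Fam


section FamEO
variable {R : Type u} [Ring R] {n : ℕ}

lemma EO_congr {x y z z' : Prop} (h : EO x y z') (hz : z' ↔ z) : EO x y z := by
  rw [← hz]; exact h

lemma famEO (pd' : PtData (Matrix (Fin n) (Fin n) R)) (hn : 3 ≤ n)
    (hD : ¬ pd'.C (Dmat hn) (D_mul_D hn))
    (a b c : Matrix (Fin 3) (Fin 3) ℤ)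
    (ha : a * a = a) (hb : b * b = b) (hc : c * c = c)
    (hab : a * b = 0) (hba : b * a = 0) (hac : a * c = 0) (hca : c * a = 0)
    (hbc : b * c = 0) (hcb : c * b = 0) (hsum : a + b + c = 1) :
    EO (pd'.C (emb hn a) (embIdem hn ha)) (pd'.C (emb hn b) (embIdem hn hb))
      (pd'.C (emb hn c) (embIdem hn hc)) := by
  have hcd : (emb (R := R) hn c + Dmat hn) * (emb hn c + Dmat hn) = emb hn c + Dmat hn := by
    rw [mul_add, add_mul, add_mul, embIdem hn hc, emb_mul_D hn c, D_mul_emb hn c, D_mul_D hn]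
    abel
  have hacd : emb (R := R) hn a * (emb hn c + Dmat hn) = 0 := by
    rw [mul_add, embOrth hn hac, emb_mul_D hn a, add_zero]
  have hcda : (emb (R := R) hn c + Dmat hn) * emb hn a = 0 := by
    rw [add_mul, embOrth hn hca, D_mul_emb hn a, add_zero]
  have hbcd : emb (R := R) hn b * (emb hn c + Dmat hn) = 0 := by
    rw [mul_add, embOrth hn hbc, emb_mul_D hn b, add_zero]
  have hcdb : (emb (R := R) hn c + Dmat hn) * emb hn b = 0 := by
    rw [add_mul, embOrth hn hcb, D_mul_emb hn b, add_zero]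
  have hsum' : emb (R := R) hn a + emb hn b + (emb hn c + Dmat hn) = 1 := by
    rw [show emb (R := R) hn a + emb hn b + (emb hn c + Dmat hn)
        = emb hn a + emb hn b + emb hn c + Dmat hn from by abel,
      emb_add, emb_add, hsum, emb_one_add_D]
  have hEO := pd'.eo (emb hn a) (emb hn b) (emb hn c + Dmat hn)
    (embIdem hn ha) (embIdem hn hb) hcd
    (embOrth hn hab) (embOrth hn hba) hacd hcda hbcd hcdb hsum'
  refine EO_congr hEO ?_
  rw [pd'.or_split (emb hn c) (Dmat hn) (embIdem hn hc) (D_mul_D hn)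
    (emb_mul_D hn c) (D_mul_emb hn c) hcd]
  exact or_iff_left hD

end FamEO

end Aux

/-- If `F : RingCatᵒᵖ ⥤ Type` restricts (along the inclusion of commutative rings) to the
prime spectrum functor, then `F` assigns the empty set to `Mₙ(R)` for every ring `R` and
every `n ≥ 3`. -/
theorem empty_spectrum_of_matrix_ring (F : RingCat.{u}ᵒᵖ ⥤ Type u)
    (hF : Nonempty ((forget₂ CommRingCat RingCat).op ⋙ F ≅ primeSpectrumFunctor.{u}))
    (R : Type u) [Ring R] (n : ℕ) (hn : 3 ≤ n) :
    IsEmpty (F.obj (op (RingCat.of (Matrix (Fin n) (Fin n) R)))) := by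
  constructor
  intro p
  obtain ⟨η⟩ := hF
  haveI : NeZero n := ⟨by omega⟩
  let pd : PtData (Matrix (Fin n) (Fin n) R) := toPtData F η _ p
  have hSidem : (∑ i : Fin n, Matrix.single i i (1 : R))
      * (∑ i : Fin n, Matrix.single i i (1 : R))
      = ∑ i : Fin n, Matrix.single i i (1 : R) := by
    rw [sum_stdBasis]; exact one_mul 1
  have hC1 : pd.C (∑ i : Fin n, Matrix.single i i (1 : R)) hSidem :=
    (pd.C_congr sum_stdBasis hSidem (one_mul 1)).mpr pd.C_one
  obtain ⟨istar, -, hCi⟩ := pd.exists_of_family (fun i => Matrix.single i i (1 : R))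
    (fun i => stdBasis_idem i) (fun i j h => stdBasis_orth h) Finset.univ hSidem hC1
  set z : Fin n := ⟨0, by omega⟩ with hzdef
  set σ : Equiv.Perm (Fin n) := Equiv.swap z istar with hσdef
  let pd' : PtData (Matrix (Fin n) (Fin n) R) := pd.comp (swapHom σ)
  have hψ : swapHom (R := R) σ (Matrix.single z z 1)
      = Matrix.single istar istar 1 := by
    rw [swapHom_stdBasis]
    congr 1 <;> simp [hσdef, Equiv.symm_swap, Equiv.swap_apply_left]
  have hC'z : pd'.C (Matrix.single z z 1) (stdBasis_idem z) := by
    refine (pd.comp_C (swapHom σ) _ (stdBasis_idem z) ?_).mpr ?_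
    · rw [hψ]; exact stdBasis_idem istar
    · exact (pd.C_congr hψ.symm (stdBasis_idem istar) _).mp hCi
  have hzz : emb (R := R) hn (Matrix.single 0 0 1) = Matrix.single z z 1 :=
    emb_stdBasis0 hn z rfl
  have hC's : pd'.C (emb hn (Matrix.single 0 0 1)) (embIdem hn (by decide)) :=
    (pd'.C_congr hzz _ (stdBasis_idem z)).mpr hC'z
  have hsum3 : emb (R := R) hn (Matrix.single 0 0 1)
      + emb hn (1 - Matrix.single 0 0 1) + Dmat hn = 1 := by
    rw [emb_add, show (Matrix.single 0 0 1 + (1 - Matrix.single 0 0 1) : Matrix (Fin 3) (Fin 3) ℤ) = 1 from by decide, emb_one_add_D]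
  have hDEO := pd'.eo (emb hn (Matrix.single 0 0 1))
    (emb hn (1 - Matrix.single 0 0 1)) (Dmat hn)
    (embIdem hn (by decide)) (embIdem hn (by decide)) (D_mul_D hn)
    (embOrth hn (by decide)) (embOrth hn (by decide))
    (emb_mul_D hn _) (D_mul_emb hn _) (emb_mul_D hn _) (D_mul_emb hn _) hsum3
  have hD : ¬ pd'.C (Dmat hn) (D_mul_D hn) := fun hd => hDEO.2.2.1 ⟨hC's, hd⟩
  have h0 := famEO pd' hn hD !![(-1 : ℤ), 1, 1; -1, 1, 1; -1, 1, 1] !![(1 : ℤ), -1, 0; 0, 0, 0; 1, -1, 0] !![(1 : ℤ), 0, -1; 1, 0, -1; 0, 0, 0] (by decide) (by decide) (by decide) (by decide) (by decide) (by decide) (by decide) (by decide) (by decide) (by decide)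
  have h1 := famEO pd' hn hD !![(0 : ℤ), -1, 1; 0, 0, 0; 0, -1, 1] !![(0 : ℤ), 1, 0; 0, 1, 0; 0, 1, 0] !![(1 : ℤ), 0, -1; 0, 0, 0; 0, 0, 0] (by decide) (by decide) (by decide) (by decide) (by decide) (by decide) (by decide) (by decide) (by decide) (by decide)
  have h2 := famEO pd' hn hD !![(0 : ℤ), 0, 0; -1, 1, 0; 1, -1, 0] !![(0 : ℤ), 0, 0; 0, 0, 0; -1, 1, 1] !![(1 : ℤ), 0, 0; 1, 0, 0; 0, 0, 0] (by decide) (by decide) (by decide) (by decide) (by decide) (by decide) (by decide) (by decide) (by decide) (by decide)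
  have h3 := famEO pd' hn hD !![(0 : ℤ), 0, 0; -1, 1, 0; 1, -1, 0] !![(0 : ℤ), 1, 1; 0, 1, 1; 0, 0, 0] !![(1 : ℤ), -1, -1; 1, -1, -1; -1, 1, 1] (by decide) (by decide) (by decide) (by decide) (by decide) (by decide) (by decide) (by decide) (by decide) (by decide)
  have h4 := famEO pd' hn hD !![(0 : ℤ), 0, 0; -1, 1, 1; 0, 0, 0] !![(0 : ℤ), 0, 0; 0, 0, -1; 0, 0, 1] !![(1 : ℤ), 0, 0; 1, 0, 0; 0, 0, 0] (by decide) (by decide) (by decide) (by decide) (by decide) (by decide) (by decide) (by decide) (by decide) (by decide)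
  have h5 := famEO pd' hn hD !![(0 : ℤ), 0, 0; -1, 1, 1; 0, 0, 0] !![(0 : ℤ), 0, 0; 1, 0, -1; -1, 0, 1] !![(1 : ℤ), 0, 0; 0, 0, 0; 1, 0, 0] (by decide) (by decide) (by decide) (by decide) (by decide) (by decide) (by decide) (by decide) (by decide) (by decide)
  have h6 := famEO pd' hn hD !![(0 : ℤ), 0, 0; -1, 1, 1; 0, 0, 0] !![(0 : ℤ), 0, 1; 0, 0, 0; 0, 0, 1] !![(1 : ℤ), 0, -1; 1, 0, -1; 0, 0, 0] (by decide) (by decide) (by decide) (by decide) (by decide) (by decide) (by decide) (by decide) (by decide) (by decide)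
  have h7 := famEO pd' hn hD !![(0 : ℤ), 0, 0; 0, 0, -1; 0, 0, 1] !![(0 : ℤ), 1, 1; 0, 1, 1; 0, 0, 0] !![(1 : ℤ), -1, -1; 0, 0, 0; 0, 0, 0] (by decide) (by decide) (by decide) (by decide) (by decide) (by decide) (by decide) (by decide) (by decide) (by decide)
  have h8 := famEO pd' hn hD !![(0 : ℤ), 0, 0; 0, 0, 0; -1, 0, 1] !![(0 : ℤ), 0, 0; 1, 1, 0; 0, 0, 0] !![(1 : ℤ), 0, 0; -1, 0, 0; 1, 0, 0] (by decide) (by decide) (by decide) (by decide) (by decide) (by decide) (by decide) (by decide) (by decide) (by decide)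
  have h9 := famEO pd' hn hD !![(0 : ℤ), 0, 0; 0, 0, 0; -1, 0, 1] !![(0 : ℤ), 1, 0; 0, 1, 0; 0, 1, 0] !![(1 : ℤ), -1, 0; 0, 0, 0; 1, -1, 0] (by decide) (by decide) (by decide) (by decide) (by decide) (by decide) (by decide) (by decide) (by decide) (by decide)
  have h10 := famEO pd' hn hD !![(0 : ℤ), 0, 0; 0, 0, 0; -1, 1, 1] !![(0 : ℤ), 0, 0; 0, 1, 0; 0, -1, 0] !![(1 : ℤ), 0, 0; 0, 0, 0; 1, 0, 0] (by decide) (by decide) (by decide) (by decide) (by decide) (by decide) (by decide) (by decide) (by decide) (by decide)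
  have h11 := famEO pd' hn hD !![(0 : ℤ), 0, 0; 0, 0, 0; -1, 1, 1] !![(0 : ℤ), 1, 0; 0, 1, 0; 0, 0, 0] !![(1 : ℤ), -1, 0; 0, 0, 0; 1, -1, 0] (by decide) (by decide) (by decide) (by decide) (by decide) (by decide) (by decide) (by decide) (by decide) (by decide)
  have h12 := famEO pd' hn hD !![(0 : ℤ), 0, 0; 0, 0, 0; 0, 0, 1] !![(0 : ℤ), 0, 0; 0, 1, 0; 0, 0, 0] !![(1 : ℤ), 0, 0; 0, 0, 0; 0, 0, 0] (by decide) (by decide) (by decide) (by decide) (by decide) (by decide) (by decide) (by decide) (by decide) (by decide)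
  have h13 := famEO pd' hn hD !![(0 : ℤ), 0, 0; 0, 0, 0; 0, 0, 1] !![(0 : ℤ), 0, 0; 1, 1, 0; 0, 0, 0] !![(1 : ℤ), 0, 0; -1, 0, 0; 0, 0, 0] (by decide) (by decide) (by decide) (by decide) (by decide) (by decide) (by decide) (by decide) (by decide) (by decide)
  have h14 := famEO pd' hn hD !![(0 : ℤ), 0, 0; 0, 0, 0; 0, 0, 1] !![(0 : ℤ), 1, 0; 0, 1, 0; 0, 0, 0] !![(1 : ℤ), -1, 0; 0, 0, 0; 0, 0, 0] (by decide) (by decide) (by decide) (by decide) (by decide) (by decide) (by decide) (by decide) (by decide) (by decide)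
  have h15 := famEO pd' hn hD !![(0 : ℤ), 0, 0; 0, 0, 0; 0, 1, 1] !![(0 : ℤ), 0, 0; 0, 1, 0; 0, -1, 0] !![(1 : ℤ), 0, 0; 0, 0, 0; 0, 0, 0] (by decide) (by decide) (by decide) (by decide) (by decide) (by decide) (by decide) (by decide) (by decide) (by decide)
  have h16 := famEO pd' hn hD !![(0 : ℤ), 0, 0; 0, 0, 0; 0, 1, 1] !![(0 : ℤ), 0, 0; 1, 1, 0; -1, -1, 0] !![(1 : ℤ), 0, 0; -1, 0, 0; 1, 0, 0] (by decide) (by decide) (by decide) (by decide) (by decide) (by decide) (by decide) (by decide) (by decide) (by decide)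
  have h17 := famEO pd' hn hD !![(0 : ℤ), 0, 0; 0, 0, 0; 0, 1, 1] !![(0 : ℤ), 1, 0; 0, 1, 0; 0, -1, 0] !![(1 : ℤ), -1, 0; 0, 0, 0; 0, 0, 0] (by decide) (by decide) (by decide) (by decide) (by decide) (by decide) (by decide) (by decide) (by decide) (by decide)
  have h18 := famEO pd' hn hD !![(0 : ℤ), 0, 0; 0, 0, 0; 1, -1, 1] !![(0 : ℤ), 1, 0; 0, 1, 0; 0, 0, 0] !![(1 : ℤ), -1, 0; 0, 0, 0; -1, 1, 0] (by decide) (by decide) (by decide) (by decide) (by decide) (by decide) (by decide) (by decide) (by decide) (by decide)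
  have h19 := famEO pd' hn hD !![(0 : ℤ), 0, 0; 0, 0, 0; 1, 0, 1] !![(0 : ℤ), 0, 0; 0, 1, 0; 0, 0, 0] !![(1 : ℤ), 0, 0; 0, 0, 0; -1, 0, 0] (by decide) (by decide) (by decide) (by decide) (by decide) (by decide) (by decide) (by decide) (by decide) (by decide)
  have h20 := famEO pd' hn hD !![(0 : ℤ), 0, 0; 0, 0, 0; 1, 0, 1] !![(0 : ℤ), 1, 0; 0, 1, 0; 0, -1, 0] !![(1 : ℤ), -1, 0; 0, 0, 0; -1, 1, 0] (by decide) (by decide) (by decide) (by decide) (by decide) (by decide) (by decide) (by decide) (by decide) (by decide)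
  have h21 := famEO pd' hn hD !![(0 : ℤ), 0, 0; 0, 0, 1; 0, 0, 1] !![(0 : ℤ), 0, 0; 0, 1, -1; 0, 0, 0] !![(1 : ℤ), 0, 0; 0, 0, 0; 0, 0, 0] (by decide) (by decide) (by decide) (by decide) (by decide) (by decide) (by decide) (by decide) (by decide) (by decide)
  have h22 := famEO pd' hn hD !![(0 : ℤ), 0, 0; 0, 0, 1; 0, 0, 1] !![(0 : ℤ), 0, 0; 1, 1, -1; 0, 0, 0] !![(1 : ℤ), 0, 0; -1, 0, 0; 0, 0, 0] (by decide) (by decide) (by decide) (by decide) (by decide) (by decide) (by decide) (by decide) (by decide) (by decide)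
  have h23 := famEO pd' hn hD !![(0 : ℤ), 0, 0; 0, 1, -1; 0, 0, 0] !![(0 : ℤ), 0, 1; 0, 0, 1; 0, 0, 1] !![(1 : ℤ), 0, -1; 0, 0, 0; 0, 0, 0] (by decide) (by decide) (by decide) (by decide) (by decide) (by decide) (by decide) (by decide) (by decide) (by decide)
  have h24 := famEO pd' hn hD !![(0 : ℤ), 0, 0; 0, 1, 0; 0, -1, 0] !![(0 : ℤ), 1, 1; 0, 0, 0; 0, 1, 1] !![(1 : ℤ), -1, -1; 0, 0, 0; 0, 0, 0] (by decide) (by decide) (by decide) (by decide) (by decide) (by decide) (by decide) (by decide) (by decide) (by decide)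
  have h25 := famEO pd' hn hD !![(0 : ℤ), 0, 0; 0, 1, 0; 0, 0, 0] !![(0 : ℤ), 0, 1; 0, 0, 0; 0, 0, 1] !![(1 : ℤ), 0, -1; 0, 0, 0; 0, 0, 0] (by decide) (by decide) (by decide) (by decide) (by decide) (by decide) (by decide) (by decide) (by decide) (by decide)
  have h26 := famEO pd' hn hD !![(0 : ℤ), 0, 0; 0, 1, 1; 0, 0, 0] !![(0 : ℤ), 0, 0; 1, 0, -1; -1, 0, 1] !![(1 : ℤ), 0, 0; -1, 0, 0; 1, 0, 0] (by decide) (by decide) (by decide) (by decide) (by decide) (by decide) (by decide) (by decide) (by decide) (by decide)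
  have h27 := famEO pd' hn hD !![(0 : ℤ), 0, 0; 0, 1, 1; 0, 0, 0] !![(0 : ℤ), 0, 1; 0, 0, -1; 0, 0, 1] !![(1 : ℤ), 0, -1; 0, 0, 0; 0, 0, 0] (by decide) (by decide) (by decide) (by decide) (by decide) (by decide) (by decide) (by decide) (by decide) (by decide)
  have h28 := famEO pd' hn hD !![(0 : ℤ), 0, 0; 1, 0, -1; -1, 0, 1] !![(0 : ℤ), 1, 1; 0, 0, 0; 0, 1, 1] !![(1 : ℤ), -1, -1; -1, 1, 1; 1, -1, -1] (by decide) (by decide) (by decide) (by decide) (by decide) (by decide) (by decide) (by decide) (by decide) (by decide)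
  have h29 := famEO pd' hn hD !![(0 : ℤ), 0, 0; 1, 1, -1; 0, 0, 0] !![(0 : ℤ), 0, 1; 0, 0, 0; 0, 0, 1] !![(1 : ℤ), 0, -1; -1, 0, 1; 0, 0, 0] (by decide) (by decide) (by decide) (by decide) (by decide) (by decide) (by decide) (by decide) (by decide) (by decide)
  have h30 := famEO pd' hn hD !![(0 : ℤ), 0, 0; 1, 1, 0; 0, 0, 0] !![(0 : ℤ), 0, 1; 0, 0, -1; 0, 0, 1] !![(1 : ℤ), 0, -1; -1, 0, 1; 0, 0, 0] (by decide) (by decide) (by decide) (by decide) (by decide) (by decide) (by decide) (by decide) (by decide) (by decide)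
  have h31 := famEO pd' hn hD !![(0 : ℤ), 0, 1; 0, 0, 0; 0, 0, 1] !![(0 : ℤ), 1, 0; 0, 1, 0; 0, 0, 0] !![(1 : ℤ), -1, -1; 0, 0, 0; 0, 0, 0] (by decide) (by decide) (by decide) (by decide) (by decide) (by decide) (by decide) (by decide) (by decide) (by decide)
  have h32 := famEO pd' hn hD !![(0 : ℤ), 0, 1; 0, 0, 1; 0, 0, 1] !![(0 : ℤ), 1, -1; 0, 1, -1; 0, 0, 0] !![(1 : ℤ), -1, 0; 0, 0, 0; 0, 0, 0] (by decide) (by decide) (by decide) (by decide) (by decide) (by decide) (by decide) (by decide) (by decide) (by decide)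
  exact coreUnsat h0 h1 h2 h3 h4 h5 h6 h7 h8 h9 h10 h11 h12 h13 h14 h15 h16 h17 h18 h19 h20 h21 h22 h23 h24 h25 h26 h27 h28 h29 h30 h31 h32
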